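/- Let Ψ be a real symmetric n×n matrix indexed by a quasi-uniform set D_n ⊂ ℝ^d, with N = ⌊n^{1/d}⌋, and suppose |Ψ_{s,t}| ≤ C (1 + N‖s−t‖₂)^{−(d+ζ)} · (1 + [ζ = 0]·log(1 + N‖s−t‖₂)) for all s,t ∈ D_n, where C > 0 is bounded and ζ ≥ 0. Then there exists a bounded constant A > 0 (depending only on C, d, ζ and the quasi-uniformity constants) such that ‖Ψ‖_F ≤ A √n. (Lemma C.3: Frobenius-norm bound for symmetric matrices with log-augmented polynomially decaying off-diagonals.) -/

import Mathlib

open MeasureTheory ProbabilityTheory Filter Matrix BoundedContinuousFunction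
open scoped BigOperators ENNReal NNReal Topology Classical

noncomputable section

/-- Points of `ℝ^d` with the Euclidean structure. -/
abbrev Pt (d : ℕ) := EuclideanSpace ℝ (Fin d)

/-- `N = ⌊n^(1/d)⌋`. -/
def Nof (d n : ℕ) : ℕ := Nat.floor ((n : ℝ) ^ ((1 : ℝ) / (d : ℝ)))

/-- Quasi-uniformity of the `n`-point sampling set `D ⊂ ℝ^d`: for every `s ∈ D` there is an
enumeration of `D \ {s}` which is monotone in the distance to `s` (so that its `i`-th element is
the `i`-th nearest neighbour of `s`), whose distances obey the two-sided bound
`Cmin (i/n)^{1/d} ≤ r_{s,i} ≤ Cmax (i/n)^{1/d}`. -/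
def QuasiUniform (d n : ℕ) (Cmin Cmax : ℝ) (D : Finset (Pt d)) : Prop :=
  D.card = n ∧
  ∀ s ∈ D, ∃ g : Fin (n - 1) → Pt d,
    (∀ i, g i ∈ D.erase s) ∧ Function.Injective g ∧
    (∀ t ∈ D.erase s, ∃ i, g i = t) ∧
    (∀ i j : Fin (n - 1), i ≤ j → dist s (g i) ≤ dist s (g j)) ∧
    (∀ i : Fin (n - 1),
      Cmin * (((i : ℕ) + 1 : ℝ) / (n : ℝ)) ^ ((1 : ℝ) / (d : ℝ)) ≤ dist s (g i) ∧
      dist s (g i) ≤ Cmax * (((i : ℕ) + 1 : ℝ) / (n : ℝ)) ^ ((1 : ℝ) / (d : ℝ)))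

/-- Preconditioning neighbourhoods `nb` and coefficients `a` of order `m` for the set `D`:
each `N_m(s) = nb s` lies in `D` within distance `c₀/N` of `s`; the coefficients annihilate all
monomials `(t-s)^r` with `|r|₁ < m`, do not annihilate some monomial with `|r|₁ ≥ m`, and are
normalized in Euclidean norm. -/
def PrecondCoeffs (d m : ℕ) (c₀ : ℝ) (N : ℕ) (D : Finset (Pt d))
    (nb : Pt d → Finset (Pt d)) (a : Pt d → Pt d → ℝ) : Prop :=
  ∀ s ∈ D,
    nb s ⊆ D ∧
    (∀ t ∈ nb s, ‖t - s‖ ≤ c₀ / (N : ℝ)) ∧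
    (∀ r : Fin d → ℕ, (∑ j, r j) < m →
      (∑ t ∈ nb s, a s t * ∏ j, (t j - s j) ^ r j) = 0) ∧
    (∃ r : Fin d → ℕ, m ≤ (∑ j, r j) ∧
      (∑ t ∈ nb s, a s t * ∏ j, (t j - s j) ^ r j) ≠ 0) ∧
    (∑ t ∈ nb s, (a s t) ^ 2) = 1

/-- The Fourier filter `f^N_s(ω)` of the preconditioning coefficients. -/
def fN (d : ℕ) (ν : ℝ) (N : ℕ) (nb : Pt d → Finset (Pt d))
    (a : Pt d → Pt d → ℝ) (s ω : Pt d) : ℂ :=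
  ((‖ω‖ ^ (-(ν + (d : ℝ) / 2)) : ℝ) : ℂ) *
    ∑ t ∈ nb s, ((a s t : ℝ) : ℂ) *
      Complex.exp (Complex.I * ((inner ℝ ((N : ℝ) • ω) (t - s) : ℝ) : ℂ))

/-- `h_N(x) = (1 + (Nx)^{-2})^{-(ν + d/2)}`. -/
def hN (d : ℕ) (ν : ℝ) (N : ℕ) (x : ℝ) : ℝ :=
  (1 + ((N : ℝ) * x) ^ (-(2 : ℝ))) ^ (-(ν + (d : ℝ) / 2))

/-- The matrix `K_{n,m}(ρ)`, the `φ₀`-normalized covariance matrix of the preconditioned data,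
given through its spectral representation. -/
def Kmat {d : ℕ} (ν : ℝ) (N : ℕ) (D : Finset (Pt d))
    (nb : Pt d → Finset (Pt d)) (a : Pt d → Pt d → ℝ) (ρ : ℝ) :
    Matrix D D ℝ :=
  Matrix.of fun s t =>
    ρ ^ (-(2 * ν)) *
      (∫ (ω : Pt d),
        Complex.exp (Complex.I * ((inner ℝ ((t : Pt d) - (s : Pt d)) ω : ℝ) : ℂ)) *
          fN d ν N nb a (s : Pt d) ω * (starRingEnd ℂ) (fN d ν N nb a (t : Pt d) ω) *
          ((hN d ν N (ρ * ‖ω‖) : ℝ) : ℂ)).re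

/-- Block-diagonal restriction of a matrix along the partition determined by a labelling `bin`. -/
def bdiag {d : ℕ} {D : Finset (Pt d)} (bin : Pt d → ℕ) (A : Matrix D D ℝ) :
    Matrix D D ℝ :=
  Matrix.of fun s t => if bin (s : Pt d) = bin (t : Pt d) then A s t else 0

/-- `L_{n,m}(ρ) = ρ^{2ν} K_{n,m}(ρ)`. -/
def Lmat {d : ℕ} (ν : ℝ) (N : ℕ) (D : Finset (Pt d))
    (nb : Pt d → Finset (Pt d)) (a : Pt d → Pt d → ℝ) (ρ : ℝ) :
    Matrix D D ℝ :=
  ρ ^ (2 * ν) • Kmat ν N D nb a ρ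

/-- `K^B_{n,m}(ρ)`: the block-diagonal approximation of `K_{n,m}(ρ)`. -/
def KmatB {d : ℕ} (ν : ℝ) (N : ℕ) (D : Finset (Pt d))
    (nb : Pt d → Finset (Pt d)) (a : Pt d → Pt d → ℝ) (bin : Pt d → ℕ) (ρ : ℝ) :
    Matrix D D ℝ := bdiag bin (Kmat ν N D nb a ρ)

/-- `L^B_{n,m}(ρ) = ρ^{2ν} K^B_{n,m}(ρ)`. -/
def LmatB {d : ℕ} (ν : ℝ) (N : ℕ) (D : Finset (Pt d))
    (nb : Pt d → Finset (Pt d)) (a : Pt d → Pt d → ℝ) (bin : Pt d → ℕ) (ρ : ℝ) :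
    Matrix D D ℝ := bdiag bin (Lmat ν N D nb a ρ)

/-- Euclidean norm of a finite-dimensional real vector. -/
def eNorm {ι : Type*} [Fintype ι] (v : ι → ℝ) : ℝ := Real.sqrt (∑ i, (v i) ^ 2)

/-- Frobenius norm of a real matrix. -/
def frobNorm {ι : Type*} [Fintype ι] (A : Matrix ι ι ℝ) : ℝ :=
  Real.sqrt (∑ i, ∑ j, (A i j) ^ 2)

/-- The `ℓ² → ℓ²` operator (spectral) norm of a real matrix. -/
def opNorm {ι : Type*} [Fintype ι] (A : Matrix ι ι ℝ) : ℝ :=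
  sSup {c : ℝ | ∃ v : ι → ℝ, eNorm v ≤ 1 ∧ c = eNorm (A.mulVec v)}

/-- The positive semidefinite square root of a positive semidefinite matrix, as
`Matrix.PosSemidef.sqrt` was defined in the older Mathlib (removed since). -/
def psdSqrt {ι : Type*} [Fintype ι] [DecidableEq ι] {A : Matrix ι ι ℝ} (hA : A.PosSemidef) :
    Matrix ι ι ℝ :=
  hA.1.eigenvectorUnitary.1 * diagonal ((↑) ∘ (√·) ∘ hA.1.eigenvalues) *
    (star hA.1.eigenvectorUnitary : Matrix ι ι ℝ)

/-- The nuclear norm (sum of singular values): trace of the psd square root of `Aᵀ A`. -/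
def nucNorm {ι : Type*} [Fintype ι] [DecidableEq ι] (A : Matrix ι ι ℝ) : ℝ :=
  (psdSqrt (Matrix.posSemidef_conjTranspose_mul_self A)).trace

/-- The standard Gaussian product measure on `ι → ℝ`. -/
def stdGaussianPi (ι : Type*) [Fintype ι] : Measure (ι → ℝ) :=
  Measure.pi fun _ => gaussianReal 0 1

end

/-- `log (1+y) ≤ 4 (1+y)^{1/4}` for `y ≥ 0`. -/
lemma aux_log_le (y : ℝ) (hy : 0 ≤ y) :
    Real.log (1 + y) ≤ 4 * (1 + y) ^ ((1 : ℝ)/4) := by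
  have hb : (0:ℝ) < 1 + y := by linarith
  have h1 : Real.log ((1 + y) ^ ((1:ℝ)/4)) = ((1:ℝ)/4) * Real.log (1 + y) :=
    Real.log_rpow hb _
  have h2 : Real.log ((1 + y) ^ ((1:ℝ)/4)) ≤ (1 + y) ^ ((1:ℝ)/4) - 1 :=
    Real.log_le_sub_one_of_pos (Real.rpow_pos_of_pos hb _)
  nlinarith [h1, h2]

/-- Squared entry bound: the log-augmented polynomially decaying bound, squared, is controlled
by a pure power with exponent `-(2d - 1/2)`. -/
lemma aux_entry_sq (d : ℕ) (C ζ : ℝ) (hd : 1 ≤ d) (hC : 0 < C) (hζ : 0 ≤ ζ) (y : ℝ)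
    (hy : 0 ≤ y) :
    (C * (1 + y) ^ (-((d : ℝ) + ζ)) * (1 + if ζ = 0 then Real.log (1 + y) else 0)) ^ 2 ≤
      25 * C ^ 2 * (1 + y) ^ (-(2 * (d : ℝ) - 2⁻¹)) := by
  have hb : (0:ℝ) < 1 + y := by linarith
  have hb1 : (1:ℝ) ≤ 1 + y := by linarith
  have hq1 : (1:ℝ) ≤ (1 + y) ^ ((1:ℝ)/4) := by
    calc (1:ℝ) = (1:ℝ) ^ ((1:ℝ)/4) := (Real.one_rpow _).symm
    _ ≤ (1 + y) ^ ((1:ℝ)/4) := Real.rpow_le_rpow zero_le_one hb1 (by norm_num)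
  have hite : (1 + if ζ = 0 then Real.log (1 + y) else 0) ≤ 5 * (1 + y) ^ ((1:ℝ)/4) := by
    split_ifs with h
    · have := aux_log_le y hy
      linarith
    · linarith
  have hite0 : 0 ≤ (1 + if ζ = 0 then Real.log (1 + y) else 0) := by
    split_ifs with h
    · have := Real.log_nonneg hb1
      linarith
    · norm_num
  have hr0 : 0 ≤ (1 + y) ^ (-((d : ℝ) + ζ)) := (Real.rpow_pos_of_pos hb _).le
  have hstep : C * (1 + y) ^ (-((d : ℝ) + ζ)) * (1 + if ζ = 0 then Real.log (1 + y) else 0) ≤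
      5 * C * (1 + y) ^ (-((d : ℝ) + ζ) + (1:ℝ)/4) := by
    have := mul_le_mul_of_nonneg_left hite (by positivity : (0:ℝ) ≤ C * (1 + y) ^ (-((d : ℝ) + ζ)))
    calc C * (1 + y) ^ (-((d : ℝ) + ζ)) * (1 + if ζ = 0 then Real.log (1 + y) else 0)
        ≤ C * (1 + y) ^ (-((d : ℝ) + ζ)) * (5 * (1 + y) ^ ((1:ℝ)/4)) := this
      _ = 5 * C * ((1 + y) ^ (-((d : ℝ) + ζ)) * (1 + y) ^ ((1:ℝ)/4)) := by ring
      _ = 5 * C * (1 + y) ^ (-((d : ℝ) + ζ) + (1:ℝ)/4) := by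
          rw [← Real.rpow_add hb]
  have hL0 : 0 ≤ C * (1 + y) ^ (-((d : ℝ) + ζ)) * (1 + if ζ = 0 then Real.log (1 + y) else 0) :=
    by positivity
  have hsq : (C * (1 + y) ^ (-((d : ℝ) + ζ)) * (1 + if ζ = 0 then Real.log (1 + y) else 0)) ^ 2 ≤
      (5 * C * (1 + y) ^ (-((d : ℝ) + ζ) + (1:ℝ)/4)) ^ 2 :=
    pow_le_pow_left₀ hL0 hstep 2
  have hsq2 : (5 * C * (1 + y) ^ (-((d : ℝ) + ζ) + (1:ℝ)/4)) ^ 2 =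
      25 * C ^ 2 * (1 + y) ^ ((-((d : ℝ) + ζ) + (1:ℝ)/4) + (-((d : ℝ) + ζ) + (1:ℝ)/4)) := by
    rw [Real.rpow_add hb (-((d : ℝ) + ζ) + (1:ℝ)/4) (-((d : ℝ) + ζ) + (1:ℝ)/4)]; ring
  have hexp : ((-((d : ℝ) + ζ) + (1:ℝ)/4) + (-((d : ℝ) + ζ) + (1:ℝ)/4)) ≤
      (-(2 * (d : ℝ) - 2⁻¹)) := by linarith
  have hmono : (1 + y) ^ ((-((d : ℝ) + ζ) + (1:ℝ)/4) + (-((d : ℝ) + ζ) + (1:ℝ)/4)) ≤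
      (1 + y) ^ (-(2 * (d : ℝ) - 2⁻¹)) :=
    Real.rpow_le_rpow_of_exponent_le hb1 hexp
  calc (C * (1 + y) ^ (-((d : ℝ) + ζ)) * (1 + if ζ = 0 then Real.log (1 + y) else 0)) ^ 2
      ≤ (5 * C * (1 + y) ^ (-((d : ℝ) + ζ) + (1:ℝ)/4)) ^ 2 := hsq
    _ = 25 * C ^ 2 * (1 + y) ^ ((-((d : ℝ) + ζ) + (1:ℝ)/4) + (-((d : ℝ) + ζ) + (1:ℝ)/4)) := hsq2
    _ ≤ 25 * C ^ 2 * (1 + y) ^ (-(2 * (d : ℝ) - 2⁻¹)) := by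
        have : (0:ℝ) ≤ 25 * C ^ 2 := by positivity
        exact mul_le_mul_of_nonneg_left hmono this

set_option maxHeartbeats 1000000 in
/-- **Lemma C.3.**  A real symmetric matrix `Ψ` on a quasi-uniform set `Dₙ` whose entries obey
the log-augmented polynomial decay
`|Ψ_{s,t}| ≤ C (1 + N‖s-t‖)^{-(d+ζ)} (1 + [ζ = 0] log(1 + N‖s-t‖))` satisfies
`‖Ψ‖_F ≤ A √n` for a bounded constant `A` depending only on `C, d, ζ` and the quasi-uniformity
constants. -/
theorem stmt14 (d : ℕ) (Cmin Cmax C ζ : ℝ)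
    (hd : 1 ≤ d) (hCmin : 0 < Cmin) (hCC : Cmin ≤ Cmax) (hC : 0 < C) (hζ : 0 ≤ ζ) :
    ∃ A : ℝ, 0 < A ∧
      ∀ (n : ℕ) (D : Finset (Pt d)), QuasiUniform d n Cmin Cmax D →
        ∀ Ψ : Matrix D D ℝ, Ψ.IsSymm →
          (∀ s t : D,
            |Ψ s t| ≤ C * (1 + (Nof d n : ℝ) * ‖(s : Pt d) - (t : Pt d)‖) ^ (-((d : ℝ) + ζ)) *
              (1 + if ζ = 0 then
                    Real.log (1 + (Nof d n : ℝ) * ‖(s : Pt d) - (t : Pt d)‖) else 0)) →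
          frobNorm Ψ ≤ A * Real.sqrt n := by
  classical
  have hd1 : (1:ℝ) ≤ (d:ℝ) := by exact_mod_cast hd
  set c : ℝ := Cmin / 2 with hc
  have hc0 : 0 < c := by positivity
  set p : ℝ := 2 * (d:ℝ) - 2⁻¹ with hp
  have hp0 : 0 < p := by simp only [hp]; linarith
  set S : ℝ := ∑' k : ℕ, ((k:ℝ) + 1) ^ (-(3/2) : ℝ) with hSdef
  have hsum : Summable (fun k : ℕ => ((k:ℝ) + 1) ^ (-(3/2) : ℝ)) := by
    have h1 : Summable (fun k : ℕ => ((k:ℝ)) ^ (-(3/2) : ℝ)) :=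
      Real.summable_nat_rpow.2 (by norm_num)
    have h2 := (summable_nat_add_iff 1).2 h1
    refine h2.congr fun k => ?_
    push_cast
    ring_nf
  have hS0 : 0 ≤ S :=
    tsum_nonneg fun k => Real.rpow_nonneg (by positivity) _
  set K : ℝ := 25 * C ^ 2 * c ^ (-p) with hK
  have hK0 : 0 ≤ K := by
    have := (Real.rpow_pos_of_pos hc0 (-p)).le
    positivity
  set B : ℝ := 25 * C ^ 2 + K * S with hB
  have hB0 : 0 ≤ B := by positivity
  refine ⟨Real.sqrt B + 1, by positivity, ?_⟩
  intro n D hQU Ψ hSymm hbound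
  set N : ℕ := Nof d n with hN
  -- pointwise squared bound
  set Φ2 : Pt d → Pt d → ℝ :=
    fun s t => 25 * C ^ 2 * (1 + (N : ℝ) * ‖s - t‖) ^ (-p) with hΦ2
  have hΨ2 : ∀ s t : D, (Ψ s t) ^ 2 ≤ Φ2 (s : Pt d) (t : Pt d) := by
    intro s t
    have hy : (0:ℝ) ≤ (N : ℝ) * ‖(s : Pt d) - (t : Pt d)‖ := by positivity
    have h1 := hbound s t
    have h2 := aux_entry_sq d C ζ hd hC hζ ((N : ℝ) * ‖(s : Pt d) - (t : Pt d)‖) hy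
    calc (Ψ s t) ^ 2 = |Ψ s t| ^ 2 := (sq_abs _).symm
      _ ≤ (C * (1 + (N : ℝ) * ‖(s : Pt d) - (t : Pt d)‖) ^ (-((d : ℝ) + ζ)) *
            (1 + if ζ = 0 then
              Real.log (1 + (N : ℝ) * ‖(s : Pt d) - (t : Pt d)‖) else 0)) ^ 2 :=
        pow_le_pow_left₀ (abs_nonneg _) h1 2
      _ ≤ 25 * C ^ 2 * (1 + (N : ℝ) * ‖(s : Pt d) - (t : Pt d)‖) ^ (-p) := h2
  -- per-row bound
  have hrow : ∀ s : D, (∑ t : D, (Ψ s t) ^ 2) ≤ B := by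
    intro s
    have hsD : (s : Pt d) ∈ D := s.2
    have hcard : D.card = n := hQU.1
    have hn1 : 1 ≤ n := by
      have : 0 < D.card := Finset.card_pos.2 ⟨_, hsD⟩
      omega
    obtain ⟨g, hgmem, hginj, hgsurj, _, hgdist⟩ := hQU.2 (s : Pt d) hsD
    have hnr1 : (1:ℝ) ≤ (n:ℝ) ^ ((1:ℝ)/(d:ℝ)) := by
      calc (1:ℝ) = (1:ℝ) ^ ((1:ℝ)/(d:ℝ)) := (Real.one_rpow _).symm
      _ ≤ (n:ℝ) ^ ((1:ℝ)/(d:ℝ)) :=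
          Real.rpow_le_rpow zero_le_one (by exact_mod_cast hn1) (by positivity)
    have hnr0 : (0:ℝ) < (n:ℝ) ^ ((1:ℝ)/(d:ℝ)) := by linarith
    have hNge : (n:ℝ) ^ ((1:ℝ)/(d:ℝ)) / 2 ≤ (N : ℝ) := by
      have hfl : (N:ℝ) = ((Nat.floor ((n : ℝ) ^ ((1 : ℝ) / (d : ℝ))) : ℕ) : ℝ) := by
        simp [hN, Nof]
      rcases le_or_gt 2 ((n:ℝ) ^ ((1:ℝ)/(d:ℝ))) with h2 | h2
      · have := Nat.sub_one_lt_floor ((n : ℝ) ^ ((1 : ℝ) / (d : ℝ)))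
        rw [hfl]; linarith
      · have h1N : (1:ℕ) ≤ Nat.floor ((n : ℝ) ^ ((1 : ℝ) / (d : ℝ))) :=
          Nat.le_floor (by exact_mod_cast hnr1)
        have : (1:ℝ) ≤ (N:ℝ) := by rw [hfl]; exact_mod_cast h1N
        linarith
    -- bound each off-diagonal term
    have hterm : ∀ i : Fin (n - 1),
        Φ2 (s : Pt d) (g i) ≤ K * (((i : ℕ) : ℝ) + 1) ^ (-(3/2) : ℝ) := by
      intro i
      set u : ℝ := (((i : ℕ) : ℝ) + 1) ^ ((1:ℝ)/(d:ℝ)) with hu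
      have hi1 : (1:ℝ) ≤ ((i : ℕ) : ℝ) + 1 := by
        have : (0:ℝ) ≤ ((i : ℕ) : ℝ) := Nat.cast_nonneg _
        linarith
      have hu1 : (1:ℝ) ≤ u := by
        calc (1:ℝ) = (1:ℝ) ^ ((1:ℝ)/(d:ℝ)) := (Real.one_rpow _).symm
        _ ≤ u := Real.rpow_le_rpow zero_le_one hi1 (by positivity)
      have hu0 : (0:ℝ) < u := by linarith
      have hdist := (hgdist i).1
      have hnorm : dist (s : Pt d) (g i) = ‖(s : Pt d) - g i‖ := dist_eq_norm _ _
      have hdivr : ((((i : ℕ) : ℝ) + 1) / (n : ℝ)) ^ ((1:ℝ)/(d:ℝ)) =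
          u / (n:ℝ) ^ ((1:ℝ)/(d:ℝ)) :=
        Real.div_rpow (by positivity) (by positivity) _
      have hlow : c * u ≤ (N : ℝ) * ‖(s : Pt d) - g i‖ := by
        have hx : Cmin * (u / (n:ℝ) ^ ((1:ℝ)/(d:ℝ))) ≤ ‖(s : Pt d) - g i‖ := by
          rw [← hnorm, ← hdivr]; exact hdist
        have hx0 : 0 ≤ Cmin * (u / (n:ℝ) ^ ((1:ℝ)/(d:ℝ))) := by positivity
        have hmul := mul_le_mul hNge hx hx0 (Nat.cast_nonneg N)
        have heq : (n:ℝ) ^ ((1:ℝ)/(d:ℝ)) / 2 * (Cmin * (u / (n:ℝ) ^ ((1:ℝ)/(d:ℝ)))) =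
            c * u := by
          field_simp [hc]
          ring
        linarith [heq ▸ hmul]
      have hcu0 : (0:ℝ) < c * u := by positivity
      have hle1 : c * u ≤ 1 + (N : ℝ) * ‖(s : Pt d) - g i‖ := by linarith
      have hstep1 : (1 + (N : ℝ) * ‖(s : Pt d) - g i‖) ^ (-p) ≤ (c * u) ^ (-p) :=
        Real.rpow_le_rpow_of_nonpos hcu0 hle1 (by linarith)
      have hstep2 : (c * u) ^ (-p) = c ^ (-p) * u ^ (-p) :=
        Real.mul_rpow hc0.le hu0.le
      have hstep3 : u ^ (-p) ≤ (((i : ℕ) : ℝ) + 1) ^ (-(3/2) : ℝ) := by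
        rw [hu, ← Real.rpow_mul (by positivity : (0:ℝ) ≤ ((i : ℕ) : ℝ) + 1)]
        refine Real.rpow_le_rpow_of_exponent_le hi1 ?_
        have hdpos : (0:ℝ) < (d:ℝ) := by linarith
        rw [div_mul_eq_mul_div, one_mul, div_le_iff₀ hdpos]
        simp only [hp]
        nlinarith
      calc Φ2 (s : Pt d) (g i) = 25 * C ^ 2 * (1 + (N : ℝ) * ‖(s : Pt d) - g i‖) ^ (-p) := rfl
        _ ≤ 25 * C ^ 2 * ((c * u) ^ (-p)) :=
            mul_le_mul_of_nonneg_left hstep1 (by positivity)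
        _ = 25 * C ^ 2 * c ^ (-p) * u ^ (-p) := by rw [hstep2]; ring
        _ ≤ 25 * C ^ 2 * c ^ (-p) * ((((i : ℕ) : ℝ) + 1) ^ (-(3/2) : ℝ)) := by
            refine mul_le_mul_of_nonneg_left hstep3 ?_
            have := (Real.rpow_pos_of_pos hc0 (-p)).le
            positivity
        _ = K * (((i : ℕ) : ℝ) + 1) ^ (-(3/2) : ℝ) := by rw [hK]
    -- assemble the row sum
    have hsum_erase : (∑ t ∈ D.erase (s : Pt d), Φ2 (s : Pt d) t) =
        ∑ i : Fin (n - 1), Φ2 (s : Pt d) (g i) := by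
      refine (Finset.sum_bij (fun a (_ : a ∈ (Finset.univ : Finset (Fin (n-1)))) => g a)
        (fun a _ => hgmem a) (fun a _ b _ h => hginj h) ?_ (fun a _ => rfl)).symm
      intro b hb
      obtain ⟨a, ha⟩ := hgsurj b hb
      exact ⟨a, Finset.mem_univ a, ha⟩
    have hfin : (∑ i : Fin (n - 1), (((i : ℕ) : ℝ) + 1) ^ (-(3/2) : ℝ)) ≤ S := by
      rw [Fin.sum_univ_eq_sum_range (fun k => (((k : ℕ) : ℝ) + 1) ^ (-(3/2) : ℝ))]
      exact Summable.sum_le_tsum (Finset.range (n-1))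
        (fun k _ => Real.rpow_nonneg (by positivity) _) hsum
    have hdiag : Φ2 (s : Pt d) (s : Pt d) = 25 * C ^ 2 := by
      simp [hΦ2, Real.one_rpow]
    calc (∑ t : D, (Ψ s t) ^ 2) ≤ ∑ t : D, Φ2 (s : Pt d) (t : Pt d) :=
        Finset.sum_le_sum fun t _ => hΨ2 s t
      _ = ∑ t ∈ D, Φ2 (s : Pt d) t := Finset.sum_coe_sort D (Φ2 (s : Pt d))
      _ = Φ2 (s : Pt d) (s : Pt d) + ∑ t ∈ D.erase (s : Pt d), Φ2 (s : Pt d) t :=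
        (Finset.add_sum_erase D _ hsD).symm
      _ = 25 * C ^ 2 + ∑ i : Fin (n - 1), Φ2 (s : Pt d) (g i) := by
          rw [hdiag, hsum_erase]
      _ ≤ 25 * C ^ 2 + ∑ i : Fin (n - 1), K * (((i : ℕ) : ℝ) + 1) ^ (-(3/2) : ℝ) := by
          gcongr with i _
          exact hterm i
      _ = 25 * C ^ 2 + K * ∑ i : Fin (n - 1), (((i : ℕ) : ℝ) + 1) ^ (-(3/2) : ℝ) := by
          rw [Finset.mul_sum]
      _ ≤ 25 * C ^ 2 + K * S := by
          have := mul_le_mul_of_nonneg_left hfin hK0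
          linarith
      _ = B := rfl
  -- total bound
  have htot : (∑ s : D, ∑ t : D, (Ψ s t) ^ 2) ≤ (n : ℝ) * B := by
    calc (∑ s : D, ∑ t : D, (Ψ s t) ^ 2) ≤ ∑ _s : D, B :=
        Finset.sum_le_sum fun s _ => hrow s
      _ = (Fintype.card D : ℝ) * B := by
          rw [Finset.sum_const, Finset.card_univ, nsmul_eq_mul]
      _ = (n : ℝ) * B := by rw [Fintype.card_coe, hQU.1]
  have hfrob : frobNorm Ψ ≤ Real.sqrt ((n : ℝ) * B) := by
    unfold frobNorm
    exact Real.sqrt_le_sqrt htot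
  calc frobNorm Ψ ≤ Real.sqrt ((n : ℝ) * B) := hfrob
    _ = Real.sqrt (n : ℝ) * Real.sqrt B := Real.sqrt_mul (by positivity) _
    _ ≤ (Real.sqrt B + 1) * Real.sqrt (n : ℝ) := by
        have h1 : 0 ≤ Real.sqrt (n : ℝ) := Real.sqrt_nonneg _
        nlinarith
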